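/- Let H be a complex Hilbert space, let T : H →L[ℂ] H be a bounded self-adjoint operator that is positive (⟪T f, f⟫ ≥ 0 for all f) and injective, and let S : H →L[ℂ] H be a bounded operator such that |⟪S u, v⟫| ≤ M · ‖T^{1/2} u‖ · ‖T^{1/2} v‖ for all u, v ∈ H, where M ≥ 0 is a constant. Then for every s > 0 the operator T + s·I is invertible, and for all f, g ∈ H one has ∫₀^∞ |⟪S((T + s·I)⁻¹ f), (T + s·I)⁻¹ g⟫| ds ≤ M · ‖f‖ · ‖g‖. -/

import Mathlib

open MeasureTheory

lemma lint_aux (φ h : ℝ → ℝ) (C : ℝ)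
    (hderiv : ∀ s ∈ Set.Ioi (0:ℝ), HasDerivAt h (φ s) s)
    (hφc : ContinuousOn φ (Set.Ioi 0))
    (hφ0 : ∀ s, 0 ≤ φ s)
    (hhub : ∀ s ∈ Set.Ioi (0:ℝ), h s ≤ C)
    (hhlb : ∀ s ∈ Set.Ioi (0:ℝ), 0 ≤ h s) :
    ∫⁻ s in Set.Ioi (0:ℝ), ENNReal.ofReal (φ s) ≤ ENNReal.ofReal C := by
  have hseg : ∀ ε n : ℝ, 0 < ε → ε ≤ n →
      ∫⁻ s in Set.Ioc ε n, ENNReal.ofReal (φ s) ≤ ENNReal.ofReal C := by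
    intro ε n hε hεn
    have hsub : Set.Icc ε n ⊆ Set.Ioi (0:ℝ) := fun x hx => lt_of_lt_of_le hε hx.1
    have hcont : ContinuousOn φ (Set.Icc ε n) := hφc.mono hsub
    have hIcc : Set.uIcc ε n = Set.Icc ε n := Set.uIcc_of_le hεn
    have hint : IntervalIntegrable φ volume ε n := by
      apply ContinuousOn.intervalIntegrable
      rwa [hIcc]
    have hftc : ∫ s in ε..n, φ s = h n - h ε := by
      apply intervalIntegral.integral_eq_sub_of_hasDerivAt
      · intro t ht
        rw [hIcc] at ht
        exact hderiv t (hsub ht)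
      · exact hint
    have hIoc : IntegrableOn φ (Set.Ioc ε n) volume := hint.1
    have e1 : ∫⁻ s in Set.Ioc ε n, ENNReal.ofReal (φ s)
        = ENNReal.ofReal (∫ s in Set.Ioc ε n, φ s) := by
      rw [MeasureTheory.ofReal_integral_eq_lintegral_ofReal hIoc
        (Filter.Eventually.of_forall fun x => hφ0 x)]
    rw [e1]
    apply ENNReal.ofReal_le_ofReal
    have e2 : ∫ s in Set.Ioc ε n, φ s = ∫ s in ε..n, φ s :=
      (intervalIntegral.integral_of_le hεn).symm
    rw [e2, hftc]
    have h1 := hhub n (lt_of_lt_of_le hε hεn)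
    have h2 := hhlb ε hε
    linarith
  set F : ℝ → ENNReal := fun s => ENNReal.ofReal (φ s) with hF
  set E : ℕ → Set ℝ := fun n => Set.Ioc (1/(n+1) : ℝ) (n+1 : ℝ) with hE
  have hEpos : ∀ n : ℕ, (0:ℝ) < 1/(n+1) := fun n => by positivity
  have hEsub : ∀ n, E n ⊆ Set.Ioi (0:ℝ) := fun n x hx => lt_trans (hEpos n) hx.1
  have hEmono : Monotone E := by
    intro m n hmn
    apply Set.Ioc_subset_Ioc
    · apply one_div_le_one_div_of_le (by positivity)
      exact_mod_cast add_le_add_left (Nat.cast_le.mpr hmn) 1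
    · exact_mod_cast add_le_add_left (Nat.cast_le.mpr hmn) 1
  set μ0 := volume.restrict (Set.Ioi (0:ℝ)) with hμ0
  have hFmeas : AEMeasurable F μ0 := by
    apply ContinuousOn.aemeasurable _ measurableSet_Ioi
    exact ENNReal.continuous_ofReal.comp_continuousOn hφc
  set fn : ℕ → ℝ → ENNReal := fun n => (E n).indicator F with hfn
  have hfnmeas : ∀ n, AEMeasurable (fn n) μ0 := fun n =>
    hFmeas.indicator measurableSet_Ioc
  have hfnmono : ∀ s, Monotone fun n => fn n s := by
    intro s m n hmn
    exact Set.indicator_le_indicator_of_subset (hEmono hmn) (fun a => zero_le) s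
  have hsup : ∀ s ∈ Set.Ioi (0:ℝ), ⨆ n, fn n s = F s := by
    intro s hs
    obtain ⟨N, hN⟩ := exists_nat_ge (max (1/s) s)
    have h1 : (1:ℝ)/s < N + 1 := lt_of_le_of_lt (le_trans (le_max_left _ _) hN) (by linarith)
    have h2 : s ≤ N + 1 := le_trans (le_trans (le_max_right _ _) hN) (by linarith)
    have hsE : s ∈ E N := by
      constructor
      · have hs' : (0:ℝ) < s := Set.mem_Ioi.mp hs
        rw [div_lt_iff₀ (by positivity : (0:ℝ) < (N:ℝ)+1)]
        have := (div_lt_iff₀ hs').mp h1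
        nlinarith
      · exact h2
    apply le_antisymm
    · exact iSup_le fun n => Set.indicator_le_self _ _ s
    · rw [← Set.indicator_of_mem hsE F]
      exact le_iSup (fun n => fn n s) N
  calc ∫⁻ s in Set.Ioi (0:ℝ), F s = ∫⁻ s, (⨆ n, fn n s) ∂μ0 := by
        apply lintegral_congr_ae
        filter_upwards [ae_restrict_mem measurableSet_Ioi] with s hs
        exact (hsup s hs).symm
    _ = ⨆ n, ∫⁻ s, fn n s ∂μ0 :=
        lintegral_iSup' hfnmeas (Filter.Eventually.of_forall hfnmono)
    _ ≤ ENNReal.ofReal C := by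
        apply iSup_le
        intro n
        rw [hfn]
        rw [lintegral_indicator measurableSet_Ioc]
        rw [hμ0, Measure.restrict_restrict measurableSet_Ioc,
          Set.inter_eq_self_of_subset_left (hEsub n)]
        exact hseg _ _ (hEpos n) (by
          have : (1:ℝ)/(n+1) ≤ 1 := by
            rw [div_le_one (by positivity)]; linarith [Nat.cast_nonneg (α := ℝ) n]
          linarith [Nat.cast_nonneg (α := ℝ) n])

set_option maxHeartbeats 1000000 in
/-- Let `T` be a bounded self-adjoint positive injective operator on a complex Hilbert space
and `S` a bounded operator with `|⟪S u, v⟫| ≤ M ‖T^{1/2} u‖ ‖T^{1/2} v‖` for all `u, v`.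
Then for every `s > 0` the operator `T + s • 1` is invertible and, for all `f, g`,
`∫₀^∞ |⟪S((T + s • 1)⁻¹ f), (T + s • 1)⁻¹ g⟫| ds ≤ M ‖f‖ ‖g‖`.
Here `T^{1/2} = cfc Real.sqrt T` and the integral is the lower Lebesgue integral. -/
theorem integral_abs_inner_resolvent_le {H : Type*} [NormedAddCommGroup H]
    [InnerProductSpace ℂ H] [CompleteSpace H] (T S : H →L[ℂ] H) (M : ℝ)
    (hT : IsSelfAdjoint T) (hpos : ∀ f : H, 0 ≤ (inner ℂ (T f) f : ℂ).re)
    (hinj : Function.Injective T) (hM : 0 ≤ M)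
    (hS : ∀ u v : H, ‖(inner ℂ (S u) v : ℂ)‖ ≤
      M * ‖cfc Real.sqrt T u‖ * ‖cfc Real.sqrt T v‖) :
    (∀ s : ℝ, 0 < s → IsUnit (T + s • (1 : H →L[ℂ] H))) ∧
    ∀ f g : H,
      ∫⁻ s in Set.Ioi (0 : ℝ),
          ENNReal.ofReal
            ‖(inner ℂ (S (Ring.inverse (T + s • (1 : H →L[ℂ] H)) f))
                (Ring.inverse (T + s • (1 : H →L[ℂ] H)) g) : ℂ)‖
        ≤ ENNReal.ofReal (M * ‖f‖ * ‖g‖) := by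
  have hTnn : 0 ≤ T := by
    rw [ContinuousLinearMap.nonneg_iff_isPositive]
    exact ⟨hT.isSymmetric, fun x => by simpa [ContinuousLinearMap.reApplyInnerSelf] using hpos x⟩
  have hu : ∀ s : ℝ, 0 < s → IsUnit (T + s • (1 : H →L[ℂ] H)) := by
    intro s hs
    rw [← spectrum.zero_notMem_iff ℝ]
    have h1 : (s • (1 : H →L[ℂ] H)) = algebraMap ℝ _ s := by
      simp [Algebra.algebraMap_eq_smul_one]
    rw [h1, ← spectrum.add_singleton_eq]
    rintro ⟨x, hx, y, hy, hxy⟩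
    have h2 := spectrum_nonneg_of_nonneg hTnn hx
    simp at hy
    subst hy
    simp at hxy
    linarith
  refine ⟨hu, ?_⟩
  set A := cfc Real.sqrt T with hA_def
  have hA : IsSelfAdjoint A := cfc_predicate _ _
  have hAA : A * A = T := by
    have h : cfc (fun x : ℝ => Real.sqrt x * Real.sqrt x) T = cfc (id : ℝ → ℝ) T :=
      cfc_congr (fun x hx => Real.mul_self_sqrt (spectrum_nonneg_of_nonneg hTnn hx))
    rw [hA_def, ← cfc_mul Real.sqrt Real.sqrt T]
    exact h.trans (cfc_id ℝ T)
  have hinner_sa : ∀ (B : H →L[ℂ] H), IsSelfAdjoint B → ∀ x y : H,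
      (inner ℂ (B x) y : ℂ) = inner ℂ x (B y) := by
    intro B hB x y
    rw [← ContinuousLinearMap.adjoint_inner_left, hB.adjoint_eq]
  -- the resolvent map
  have hψsa : ∀ s : ℝ, 0 < s → IsSelfAdjoint (Ring.inverse (T + s • (1 : H →L[ℂ] H))) := by
    intro s hs
    have hsa : IsSelfAdjoint (T + s • (1 : H →L[ℂ] H)) := by
      refine hT.add ?_
      rw [IsSelfAdjoint, star_smul, star_one, star_trivial]
    rw [IsSelfAdjoint, ← Ring.inverse_star, hsa.star_eq]
  -- derivative statement
  have hderiv : ∀ f : H, ∀ s ∈ Set.Ioi (0:ℝ),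
      HasDerivAt (fun s : ℝ => s * (inner ℂ (f : H)
          (Ring.inverse (T + s • (1 : H →L[ℂ] H)) f) : ℂ).re)
        (‖A (Ring.inverse (T + s • (1 : H →L[ℂ] H)) f)‖ ^ 2) s := by
    intro f s hs
    rw [Set.mem_Ioi] at hs
    set ψ : ℝ → H →L[ℂ] H := fun s => Ring.inverse (T + s • (1 : H →L[ℂ] H)) with hψ
    set L : (H →L[ℂ] H) →L[ℝ] ℝ :=
      Complex.reCLM.comp (((innerSL ℂ f).restrictScalars ℝ).comp
        ((ContinuousLinearMap.apply ℂ H f).restrictScalars ℝ)) with hL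
    have hLa : ∀ a : H →L[ℂ] H, L a = (inner ℂ (f : H) (a f) : ℂ).re := fun a => rfl
    obtain ⟨u, hu'⟩ := hu s hs
    have hx : HasDerivAt (fun s : ℝ => T + s • (1 : H →L[ℂ] H)) (1 : H →L[ℂ] H) s := by
      simpa using ((hasDerivAt_id s).smul_const (1 : H →L[ℂ] H)).const_add T
    have h1 := hasFDerivAt_ringInverse (𝕜 := ℝ) u
    rw [hu'] at h1
    have hri : ψ s = ((u⁻¹ : (H →L[ℂ] H)ˣ) : H →L[ℂ] H) := by
      simp only [hψ]; rw [← hu', Ring.inverse_unit]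
    have hinv : HasDerivAt ψ (-(ψ s * ψ s)) s := by
      have h3 := h1.comp_hasDerivAt s hx
      simp only [ContinuousLinearMap.neg_apply, ContinuousLinearMap.mulLeftRight_apply,
        mul_one] at h3
      rw [hri]; exact h3
    have hgder : HasDerivAt (fun s => L (ψ s)) (L (-(ψ s * ψ s))) s :=
      L.hasFDerivAt.comp_hasDerivAt s hinv
    have hprod := (hasDerivAt_id s).mul hgder
    have hRmul : ψ s * (T + s • (1 : H →L[ℂ] H)) = 1 := Ring.inverse_mul_cancel _ (hu s hs)
    have hRT : ψ s * T = 1 - s • ψ s := by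
      have h2 : ψ s * T + s • ψ s = 1 := by
        calc ψ s * T + s • ψ s = ψ s * (T + s • 1) := by
              rw [mul_add, mul_smul_comm, mul_one]
          _ = 1 := hRmul
      linear_combination (norm := abel) h2
    have hkey : ψ s - s • (ψ s * ψ s) = ψ s * T * ψ s := by
      rw [hRT, sub_mul, one_mul, smul_mul_assoc]
    have hval : L (ψ s) - s * L (ψ s * ψ s) = ‖A (ψ s f)‖ ^ 2 := by
      have e0 : L (ψ s) - s * L (ψ s * ψ s) = L (ψ s - s • (ψ s * ψ s)) := by
        rw [map_sub, L.map_smul, smul_eq_mul]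
      rw [e0, hkey, hLa]
      have e1 : (inner ℂ (f : H) ((ψ s * T * ψ s) f) : ℂ) = inner ℂ (A (ψ s f)) (A (ψ s f)) := by
        calc (inner ℂ (f : H) ((ψ s * T * ψ s) f) : ℂ)
            = inner ℂ (f : H) (ψ s (T (ψ s f))) := by rfl
          _ = inner ℂ (ψ s f) (T (ψ s f)) := by rw [← hinner_sa _ (hψsa s hs)]
          _ = inner ℂ (ψ s f) (A (A (ψ s f))) := by rw [← hAA]; rfl
          _ = inner ℂ (A (ψ s f)) (A (ψ s f)) := by rw [← hinner_sa _ hA]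
      rw [e1]
      have := inner_self_eq_norm_sq (𝕜 := ℂ) (A (ψ s f))
      simpa using this
    refine HasDerivAt.congr_deriv hprod ?_
    rw [← hval]
    have e2 : L (-(ψ s * ψ s)) = - L (ψ s * ψ s) := by rw [map_neg]
    rw [e2]
    simp only [id_eq]
    ring
  -- continuity of resolvent
  have hψc : ∀ s : ℝ, 0 < s →
      ContinuousAt (fun s : ℝ => Ring.inverse (T + s • (1 : H →L[ℂ] H))) s := by
    intro s hs
    obtain ⟨u, hu'⟩ := hu s hs
    have hc1 : ContinuousAt (fun s : ℝ => T + s • (1 : H →L[ℂ] H)) s :=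
      (((hasDerivAt_id s).smul_const (1 : H →L[ℂ] H)).const_add T).continuousAt
    have hc2 : ContinuousAt Ring.inverse (T + s • (1 : H →L[ℂ] H)) := by
      rw [← hu']; exact NormedRing.inverse_continuousAt u
    exact ContinuousAt.comp (g := Ring.inverse)
      (f := fun s : ℝ => T + s • (1 : H →L[ℂ] H)) hc2 hc1
  -- bounds on h
  have hbound : ∀ f : H, ∀ n : ℝ, 0 < n →
      0 ≤ n * (inner ℂ (f : H) (Ring.inverse (T + n • (1 : H →L[ℂ] H)) f) : ℂ).re ∧
      n * (inner ℂ (f : H) (Ring.inverse (T + n • (1 : H →L[ℂ] H)) f) : ℂ).re ≤ ‖f‖ ^ 2 := by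
    intro f n hn
    set v := Ring.inverse (T + n • (1 : H →L[ℂ] H)) f with hv
    have hfv : T v + n • v = f := by
      have h1 : (T + n • (1 : H →L[ℂ] H)) * Ring.inverse (T + n • (1 : H →L[ℂ] H)) = 1 :=
        Ring.mul_inverse_cancel _ (hu n hn)
      have h2 := congrArg (fun (B : H →L[ℂ] H) => B f) h1
      simpa [ContinuousLinearMap.mul_apply] using h2
    have hre : (inner ℂ (f : H) v : ℂ).re = (inner ℂ (T v) v : ℂ).re + n * ‖v‖ ^ 2 := by
      rw [← hfv]
      rw [RCLike.real_smul_eq_coe_smul (K := ℂ), inner_add_left, inner_smul_left,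
        inner_self_eq_norm_sq_to_K]
      simp [Complex.conj_ofReal, ← Complex.ofReal_pow]
    have hTv : 0 ≤ (inner ℂ (T v) v : ℂ).re := hpos v
    have hnormf : ‖f‖ ^ 2 = ‖T v‖ ^ 2 + 2 * n * (inner ℂ (T v) v : ℂ).re + n ^ 2 * ‖v‖ ^ 2 := by
      rw [← hfv]
      have h1 := norm_add_sq (𝕜 := ℂ) (T v) (n • v)
      rw [RCLike.real_smul_eq_coe_smul (K := ℂ)] at h1
      simp only [inner_smul_right, norm_smul] at h1
      simp at h1
      rw [h1, mul_pow, sq_abs]; ring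
    constructor
    · have h3 : 0 ≤ (inner ℂ (f : H) v : ℂ).re := by rw [hre]; positivity
      positivity
    · rw [hre, hnormf]; nlinarith [norm_nonneg (T v), sq_nonneg (‖v‖), norm_nonneg v]
  -- key integral bound
  have key : ∀ f : H,
      ∫⁻ s in Set.Ioi (0:ℝ),
          ENNReal.ofReal (‖A (Ring.inverse (T + s • (1 : H →L[ℂ] H)) f)‖ ^ 2)
        ≤ ENNReal.ofReal (‖f‖ ^ 2) := by
    intro f
    apply lint_aux
      (fun s => ‖A (Ring.inverse (T + s • (1 : H →L[ℂ] H)) f)‖ ^ 2)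
      (fun s => s * (inner ℂ (f : H) (Ring.inverse (T + s • (1 : H →L[ℂ] H)) f) : ℂ).re)
      (‖f‖ ^ 2)
    · exact hderiv f
    · intro s hs
      rw [Set.mem_Ioi] at hs
      have hc := hψc s hs
      have : ContinuousAt (fun s : ℝ =>
          ‖A (Ring.inverse (T + s • (1 : H →L[ℂ] H)) f)‖ ^ 2) s := by
        have houter : Continuous (fun B : H →L[ℂ] H => ‖A (B f)‖ ^ 2) := by
          fun_prop
        exact houter.continuousAt.comp hc
      exact this.continuousWithinAt
    · intro s; positivity
    · intro s hs; exact (hbound f s (Set.mem_Ioi.mp hs)).2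
    · intro s hs; exact (hbound f s (Set.mem_Ioi.mp hs)).1
  -- Hölder
  intro f g
  have hconj : Real.HolderConjugate 2 2 := Real.HolderConjugate.two_two
  set μ0 := volume.restrict (Set.Ioi (0:ℝ)) with hμ0
  have hmeas : ∀ w : H, AEMeasurable
      (fun s : ℝ => ENNReal.ofReal ‖A (Ring.inverse (T + s • (1 : H →L[ℂ] H)) w)‖) μ0 := by
    intro w
    apply ContinuousOn.aemeasurable _ measurableSet_Ioi
    intro s hs
    rw [Set.mem_Ioi] at hs
    have houter : Continuous (fun B : H →L[ℂ] H => ENNReal.ofReal ‖A (B w)‖) := by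
      apply ENNReal.continuous_ofReal.comp
      fun_prop
    exact (houter.continuousAt.comp (hψc s hs)).continuousWithinAt
  have hsq : ∀ x : ℝ, 0 ≤ x → (ENNReal.ofReal x) ^ (2:ℝ) = ENNReal.ofReal (x ^ 2) := by
    intro x hx
    rw [ENNReal.ofReal_rpow_of_nonneg hx (by norm_num)]
    have e : x ^ (2:ℝ) = x ^ 2 := by
      rw [show ((2:ℝ)) = ((2:ℕ):ℝ) by norm_num, Real.rpow_natCast]
    rw [e]
  have hhalf : ∀ x : ℝ, 0 ≤ x → (ENNReal.ofReal (x ^ 2)) ^ (1/(2:ℝ)) = ENNReal.ofReal x := by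
    intro x hx
    rw [ENNReal.ofReal_rpow_of_nonneg (by positivity) (by norm_num)]
    congr 1
    rw [show (x ^ 2 : ℝ) = x ^ ((2:ℕ):ℝ) by rw [Real.rpow_natCast],
      ← Real.rpow_mul hx]
    norm_num
  calc ∫⁻ s in Set.Ioi (0:ℝ), ENNReal.ofReal
          ‖(inner ℂ (S (Ring.inverse (T + s • (1 : H →L[ℂ] H)) f))
              (Ring.inverse (T + s • (1 : H →L[ℂ] H)) g) : ℂ)‖
      ≤ ∫⁻ s in Set.Ioi (0:ℝ), ENNReal.ofReal M *
          (ENNReal.ofReal ‖A (Ring.inverse (T + s • (1 : H →L[ℂ] H)) f)‖ *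
           ENNReal.ofReal ‖A (Ring.inverse (T + s • (1 : H →L[ℂ] H)) g)‖) := by
        apply lintegral_mono
        intro s
        calc ENNReal.ofReal ‖(inner ℂ (S (Ring.inverse (T + s • (1 : H →L[ℂ] H)) f))
                (Ring.inverse (T + s • (1 : H →L[ℂ] H)) g) : ℂ)‖
            ≤ ENNReal.ofReal (M * ‖A (Ring.inverse (T + s • (1 : H →L[ℂ] H)) f)‖ *
                ‖A (Ring.inverse (T + s • (1 : H →L[ℂ] H)) g)‖) :=
              ENNReal.ofReal_le_ofReal (hS _ _)
          _ = _ := by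
              rw [ENNReal.ofReal_mul (mul_nonneg hM (norm_nonneg _)),
                ENNReal.ofReal_mul hM, mul_assoc]
    _ = ENNReal.ofReal M * ∫⁻ s in Set.Ioi (0:ℝ),
          (ENNReal.ofReal ‖A (Ring.inverse (T + s • (1 : H →L[ℂ] H)) f)‖ *
           ENNReal.ofReal ‖A (Ring.inverse (T + s • (1 : H →L[ℂ] H)) g)‖) :=
        lintegral_const_mul' _ _ ENNReal.ofReal_ne_top
    _ ≤ ENNReal.ofReal M *
          ((∫⁻ s in Set.Ioi (0:ℝ),
            ENNReal.ofReal ‖A (Ring.inverse (T + s • (1 : H →L[ℂ] H)) f)‖ ^ (2:ℝ)) ^ (1/(2:ℝ)) *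
           (∫⁻ s in Set.Ioi (0:ℝ),
            ENNReal.ofReal ‖A (Ring.inverse (T + s • (1 : H →L[ℂ] H)) g)‖ ^ (2:ℝ)) ^ (1/(2:ℝ))) := by
        apply mul_le_mul_right
        exact ENNReal.lintegral_mul_le_Lp_mul_Lq μ0 hconj (hmeas f) (hmeas g)
    _ ≤ ENNReal.ofReal M * (ENNReal.ofReal ‖f‖ * ENNReal.ofReal ‖g‖) := by
        apply mul_le_mul_right
        have hb : ∀ w : H,
            (∫⁻ s in Set.Ioi (0:ℝ),
              ENNReal.ofReal ‖A (Ring.inverse (T + s • (1 : H →L[ℂ] H)) w)‖ ^ (2:ℝ)) ^ (1/(2:ℝ))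
            ≤ ENNReal.ofReal ‖w‖ := by
          intro w
          have e3 : ∫⁻ s in Set.Ioi (0:ℝ),
              ENNReal.ofReal ‖A (Ring.inverse (T + s • (1 : H →L[ℂ] H)) w)‖ ^ (2:ℝ)
              = ∫⁻ s in Set.Ioi (0:ℝ),
              ENNReal.ofReal (‖A (Ring.inverse (T + s • (1 : H →L[ℂ] H)) w)‖ ^ 2) := by
            apply lintegral_congr
            intro s
            exact hsq _ (norm_nonneg _)
          rw [e3, ← hhalf ‖w‖ (norm_nonneg w)]
          exact ENNReal.rpow_le_rpow (key w) (by norm_num)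
        exact mul_le_mul' (hb f) (hb g)
    _ = ENNReal.ofReal (M * ‖f‖ * ‖g‖) := by
        rw [ENNReal.ofReal_mul (mul_nonneg hM (norm_nonneg _)),
          ENNReal.ofReal_mul hM, mul_assoc]
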